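/- Let d ≥ 2 and let D_r, D_n be Borel probability measures on ℝ^d with Lebesgue densities p_r, p_n. Define ρ_{D_r}(u) := ( ∫_0^∞ t^d p_r(t·u) dt )^{1/(d+1)} and ρ̃_{D_n}(u) := ( ∫_0^∞ t^{d−2} p_n(t·u) dt )^{1/(d−1)} for u ∈ S^{d-1}, and assume both are positive and continuous on S^{d-1}; let L_r be the star body with radial function ρ_{D_r}. Then for every star body K in ℝ^d: (i) the function u ↦ ( ρ_K(u)^{−1} + ρ_K(u) · ρ̃_{D_n}(u)^{d−1} / ρ_{D_r}(u)^{d+1} )^{−1} is the radial function of a star body K_{r,n}; and (ii) E_{D_r}[‖x‖_K] + E_{D_n}[‖x‖_K^{−1}] = ∫_{S^{d-1}} ( ρ_K(u)^{−1} + ρ_K(u) · ρ̃_{D_n}(u)^{d−1} / ρ_{D_r}(u)^{d+1} ) · ρ_{D_r}(u)^{d+1} dσ(u) = d · Ṽ_{−1}(L_r, K_{r,n}), with both expectations finite. -/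

import Mathlib

open MeasureTheory Metric Set Filter Pointwise

noncomputable section

abbrev Euc (d : ℕ) : Type := EuclideanSpace ℝ (Fin d)

/-- Radial function of a set: `ρ_K(x) = sup {t > 0 : t • x ∈ K}`. -/
def radialFn {d : ℕ} (K : Set (Euc d)) (x : Euc d) : ℝ :=
  sSup {t : ℝ | 0 < t ∧ t • x ∈ K}

/-- A star body: compact, `0` in the interior, star-shaped about `0`, with radial function
positive and continuous on the unit sphere. -/
def IsStarBody {d : ℕ} (K : Set (Euc d)) : Prop :=
  IsCompact K ∧ (0 : Euc d) ∈ interior K ∧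
    (∀ x ∈ K, segment ℝ 0 x ⊆ K) ∧
    (∀ u ∈ sphere (0 : Euc d) 1, 0 < radialFn K u) ∧
    ContinuousOn (radialFn K) (sphere (0 : Euc d) 1)

/-- The kernel of a star body. -/
def starKernel {d : ℕ} (K : Set (Euc d)) : Set (Euc d) :=
  {x | x ∈ K ∧ ∀ y ∈ K, segment ℝ x y ⊆ K}

/-- Radial metric between star bodies. -/
def radialDist {d : ℕ} (K L : Set (Euc d)) : ℝ :=
  ⨆ u : sphere (0 : Euc d) 1, |radialFn K (u : Euc d) - radialFn L (u : Euc d)|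

/-- The adversarial objective `F(K; μ, ν) = E_μ[‖x‖_K] - E_ν[‖x‖_K]`. -/
def Fobj {d : ℕ} (K : Set (Euc d)) (μ ν : Measure (Euc d)) : ℝ :=
  (∫ x, gauge K x ∂μ) - (∫ x, gauge K x ∂ν)


variable {d : ℕ}

lemma radial_set_eq {K : Set (Euc d)} (hK : IsStarBody K) {u : Euc d} (hu : ‖u‖ = 1) :
    {t : ℝ | 0 < t ∧ t • u ∈ K} = Ioc 0 (radialFn K u) := by
  obtain ⟨hc, h0, hstar, -, -⟩ := hK
  set S := {t : ℝ | 0 < t ∧ t • u ∈ K} with hS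
  obtain ⟨ε, hε, hball⟩ := Metric.mem_nhds_iff.1 (mem_interior_iff_mem_nhds.1 h0)
  have hSne : S.Nonempty := by
    refine ⟨ε / 2, by positivity, hball ?_⟩
    simp only [mem_ball_zero_iff, norm_smul, hu, mul_one]
    rw [Real.norm_eq_abs, abs_of_pos (by positivity : (0:ℝ) < ε/2)]
    linarith
  obtain ⟨R, hR⟩ := hc.isBounded.subset_closedBall 0
  have hSbdd : BddAbove S := by
    refine ⟨R, fun t ht => ?_⟩
    have := hR ht.2
    simpa [mem_closedBall_zero_iff, norm_smul, hu, abs_of_pos ht.1] using this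
  have hmem : ∀ t ∈ S, ∀ s, 0 < s → s ≤ t → s ∈ S := by
    rintro t ⟨ht0, htK⟩ s hs0 hst
    refine ⟨hs0, ?_⟩
    have : s • u = (s / t) • (t • u) := by
      rw [smul_smul]; congr 1; field_simp
    rw [this]
    refine hstar _ htK ?_
    have : (s/t) • (t • u) ∈ segment ℝ (0 : Euc d) (t • u) := by
      rw [segment_eq_image ℝ (0 : Euc d) (t • u)]
      exact ⟨s/t, ⟨by positivity, by rw [div_le_one ht0]; exact hst⟩, by simp⟩
    exact this
  have hrK : radialFn K u • u ∈ K := by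
    obtain ⟨f, hfmono, hftend, hfS⟩ := exists_seq_tendsto_sSup hSne hSbdd
    have : Tendsto (fun n => f n • u) atTop (nhds (radialFn K u • u)) :=
      hftend.smul_const u
    exact hc.isClosed.mem_of_tendsto this (Eventually.of_forall fun n => (hfS n).2)
  have hrpos : 0 < radialFn K u := lt_of_lt_of_le hSne.choose_spec.1 (le_csSup hSbdd hSne.choose_spec)
  ext t
  constructor
  · rintro ⟨ht0, htK⟩
    exact ⟨ht0, le_csSup hSbdd ⟨ht0, htK⟩⟩
  · rintro ⟨ht0, htr⟩
    exact hmem _ ⟨hrpos, hrK⟩ t ht0 htr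

lemma gauge_eq_inv_radialFn {K : Set (Euc d)} (hK : IsStarBody K) {u : Euc d} (hu : ‖u‖ = 1) :
    gauge K u = (radialFn K u)⁻¹ := by
  have hset := radial_set_eq hK hu
  have hrpos : 0 < radialFn K u := hK.2.2.2.1 u (by simpa [mem_sphere_iff_norm] using hu)
  rw [gauge_def]
  have : {r ∈ Set.Ioi (0:ℝ) | u ∈ r • K} = Ici (radialFn K u)⁻¹ := by
    ext r
    simp only [mem_sep_iff, mem_Ioi, mem_Ici]
    constructor
    · rintro ⟨hr0, hrK⟩
      rw [mem_smul_set_iff_inv_smul_mem₀ hr0.ne'] at hrK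
      have : r⁻¹ ∈ Ioc 0 (radialFn K u) := hset ▸ ⟨by positivity, hrK⟩
      calc (radialFn K u)⁻¹ ≤ r⁻¹⁻¹ := by
            exact inv_anti₀ (by positivity) this.2
        _ = r := inv_inv r
    · intro hr
      have hr0 : 0 < r := lt_of_lt_of_le (by positivity) hr
      refine ⟨hr0, ?_⟩
      rw [mem_smul_set_iff_inv_smul_mem₀ hr0.ne']
      have : r⁻¹ ∈ {t : ℝ | 0 < t ∧ t • u ∈ K} := by
        rw [hset]
        exact ⟨by positivity, by rw [← inv_inv (radialFn K u)]; exact inv_anti₀ (by positivity) hr⟩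
      exact this.2
  rw [this, csInf_Ici]

lemma exists_starBody (hd : 1 ≤ d) (f : sphere (0 : Euc d) 1 → ℝ)
    (hf : Continuous f) (hfp : ∀ u, 0 < f u) :
    ∃ K : Set (Euc d), IsStarBody K ∧
      ∀ u : sphere (0 : Euc d) 1, radialFn K (u : Euc d) = f u := by
  classical
  set F : Euc d → ℝ :=
    fun x => if h : ‖x‖⁻¹ • x ∈ sphere (0 : Euc d) 1 then f ⟨_, h⟩ else 1 with hFdef
  set K : Set (Euc d) := {x | ‖x‖ ≤ F x} with hKdef
  have hsph : ∀ x : Euc d, x ≠ 0 → ‖x‖⁻¹ • x ∈ sphere (0 : Euc d) 1 := by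
    intro x hx
    rw [mem_sphere_zero_iff_norm, norm_smul, norm_inv, norm_norm, inv_mul_cancel₀ (norm_ne_zero_iff.2 hx)]
  have hzero : (0 : Euc d) ∈ K := by
    have h0 : ¬ (‖(0:Euc d)‖⁻¹ • (0:Euc d) ∈ sphere (0 : Euc d) 1) := by
      simp [mem_sphere_iff_norm]
    simp only [hKdef, mem_setOf_eq, hFdef, smul_zero] at *
    rw [dif_neg h0]
    simp
  have hFsmul : ∀ (x : Euc d), x ≠ 0 → ∀ t : ℝ, 0 < t → F (t • x) = F x := by
    intro x hx t ht
    have hvec : ‖t • x‖⁻¹ • (t • x) = ‖x‖⁻¹ • x := by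
      rw [norm_smul, Real.norm_eq_abs, abs_of_pos ht, mul_inv, smul_smul]
      rw [show t⁻¹ * ‖x‖⁻¹ * t = ‖x‖⁻¹ by rw [mul_comm t⁻¹, mul_assoc, inv_mul_cancel₀ ht.ne', mul_one]]
    simp only [hFdef, hvec]
  have hFx : ∀ (x : Euc d) (hx : x ≠ 0), F x = f ⟨‖x‖⁻¹ • x, hsph x hx⟩ :=
    fun x hx => dif_pos (hsph x hx)
  have hFu : ∀ u : sphere (0 : Euc d) 1, F (u : Euc d) = f u := by
    intro u
    have hu : ‖(u : Euc d)‖ = 1 := by simpa [mem_sphere_iff_norm] using u.2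
    have : ‖(u:Euc d)‖⁻¹ • (u : Euc d) = (u : Euc d) := by rw [hu]; simp
    simp only [hFdef, this]
    rw [dif_pos u.2]
  have hradset : ∀ u : sphere (0 : Euc d) 1,
      {t : ℝ | 0 < t ∧ t • (u : Euc d) ∈ K} = Ioc 0 (f u) := by
    intro u
    have hu : ‖(u : Euc d)‖ = 1 := by simpa [mem_sphere_iff_norm] using u.2
    have hu0 : (u : Euc d) ≠ 0 := by intro h; rw [h] at hu; simp at hu
    ext t
    simp only [mem_setOf_eq, mem_Ioc]
    constructor
    · rintro ⟨ht0, htK⟩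
      refine ⟨ht0, ?_⟩
      have := htK
      rw [hKdef, mem_setOf_eq, hFsmul _ hu0 t ht0, norm_smul, Real.norm_eq_abs,
        abs_of_pos ht0, hu, mul_one, hFu] at this
      exact this
    · rintro ⟨ht0, htf⟩
      refine ⟨ht0, ?_⟩
      rw [hKdef, mem_setOf_eq, hFsmul _ hu0 t ht0, norm_smul, Real.norm_eq_abs,
        abs_of_pos ht0, hu, mul_one, hFu]
      exact htf
  have hrad : ∀ u : sphere (0 : Euc d) 1, radialFn K (u : Euc d) = f u := by
    intro u
    rw [radialFn, hradset u, csSup_Ioc (hfp u)]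
  -- continuity of F off zero
  have hFcont : ContinuousOn F {x : Euc d | x ≠ 0} := by
    have hm : ContinuousOn (fun x : Euc d => ‖x‖⁻¹ • x) {x : Euc d | x ≠ 0} := by
      refine ContinuousOn.fun_smul ?_ continuousOn_id
      exact (continuous_norm.continuousOn).inv₀ (fun x hx => by
        simpa [norm_eq_zero] using hx)
    set fhat : Euc d → ℝ :=
      fun y => if h : y ∈ sphere (0 : Euc d) 1 then f ⟨y, h⟩ else 1 with hfhat
    have hfhatc : ContinuousOn fhat (sphere (0 : Euc d) 1) := by
      rw [continuousOn_iff_continuous_restrict]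
      have : (sphere (0 : Euc d) 1).domRestrict fhat = f := by
        funext y
        simp only [restrict_apply, hfhat]
        exact dif_pos y.2
      rw [this]; exact hf
    have : F = fhat ∘ (fun x : Euc d => ‖x‖⁻¹ • x) := rfl
    rw [this]
    exact hfhatc.comp hm (fun x hx => hsph x hx)
  -- sphere is nonempty, f has positive min and finite max
  have hvne : (sphere (0 : Euc d) 1).Nonempty := by
    refine ⟨EuclideanSpace.single (⟨0, hd⟩ : Fin d) (1:ℝ), ?_⟩
    simp [mem_sphere_iff_norm, EuclideanSpace.norm_single]
  have hcs : CompactSpace (sphere (0 : Euc d) 1) := by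
    rw [← isCompact_iff_compactSpace]
    exact isCompact_sphere _ _
  have huniv : (univ : Set (sphere (0 : Euc d) 1)).Nonempty := by
    obtain ⟨v, hv⟩ := hvne
    exact ⟨⟨v, hv⟩, trivial⟩
  obtain ⟨u₀, -, hmin⟩ := isCompact_univ.exists_isMinOn huniv hf.continuousOn
  obtain ⟨u₁, -, hmax⟩ := isCompact_univ.exists_isMaxOn huniv hf.continuousOn
  rw [isMinOn_iff] at hmin
  rw [isMaxOn_iff] at hmax
  set ε := f u₀ with hε
  have hεpos : 0 < ε := hfp u₀
  -- closed
  have hclosed : IsClosed K := by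
    apply IsSeqClosed.isClosed
    intro x p hx hxp
    by_cases hp : p = 0
    · rw [hp]; exact hzero
    · have hopen : IsOpen {x : Euc d | x ≠ 0} := isOpen_ne
      have hca : ContinuousAt F p :=
        hFcont.continuousAt (hopen.mem_nhds hp)
      have h1 : Tendsto (fun n => F (x n)) atTop (nhds (F p)) := hca.tendsto.comp hxp
      have h2 : Tendsto (fun n => ‖x n‖) atTop (nhds ‖p‖) := hxp.norm
      exact le_of_tendsto_of_tendsto' h2 h1 (fun n => hx n)
  -- bounded
  have hbdd : K ⊆ closedBall 0 (max (f u₁) 1) := by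
    intro x hxK
    rw [mem_closedBall_zero_iff]
    by_cases hx : x = 0
    · rw [hx, norm_zero]; exact le_max_of_le_right zero_le_one
    · have : ‖x‖ ≤ F x := hxK
      rw [hFx x hx] at this
      exact le_trans this (le_max_of_le_left (hmax _ trivial))
  have hcomp : IsCompact K :=
    isCompact_of_isClosed_isBounded hclosed ((isBounded_closedBall).subset hbdd)
  -- 0 in interior
  have hint : (0 : Euc d) ∈ interior K := by
    rw [mem_interior]
    refine ⟨ball 0 ε, ?_, isOpen_ball, by simpa using hεpos⟩
    intro x hxb
    rw [mem_ball_zero_iff] at hxb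
    by_cases hx : x = 0
    · rw [hx]; exact hzero
    · show ‖x‖ ≤ F x
      rw [hFx x hx]
      exact le_trans hxb.le (hmin _ trivial)
  -- star-shaped
  have hstar : ∀ x ∈ K, segment ℝ (0 : Euc d) x ⊆ K := by
    intro x hxK y hy
    rw [segment_eq_image ℝ (0 : Euc d) x] at hy
    obtain ⟨θ, hθ, rfl⟩ := hy
    simp only [smul_zero, zero_add]
    by_cases hx : x = 0
    · simpa [hx] using hzero
    · rcases eq_or_lt_of_le hθ.1 with h0 | h0
      · rw [← h0]; simpa using hzero
      · show ‖θ • x‖ ≤ F (θ • x)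
        rw [hFsmul _ hx θ h0, norm_smul, Real.norm_eq_abs, abs_of_pos h0]
        calc θ * ‖x‖ ≤ 1 * ‖x‖ := by
              apply mul_le_mul_of_nonneg_right hθ.2 (norm_nonneg x)
          _ = ‖x‖ := one_mul _
          _ ≤ F x := hxK
  -- radial positivity / continuity
  refine ⟨K, ⟨hcomp, hint, hstar, ?_, ?_⟩, hrad⟩
  · intro u hu
    rw [hrad ⟨u, hu⟩]
    exact hfp _
  · have hsub : sphere (0 : Euc d) 1 ⊆ {x : Euc d | x ≠ 0} := by
      intro x hx h0
      rw [h0] at hx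
      simp [mem_sphere_iff_norm] at hx
    refine (hFcont.mono hsub).congr ?_
    intro x hx
    have := hrad ⟨x, hx⟩
    rw [this, ← hFu ⟨x, hx⟩]

lemma sigma_isFiniteMeasure (hd : 1 ≤ d) (σ : Measure (sphere (0 : Euc d) 1))
    (hσ : ∀ g : Euc d → ℝ, Integrable g volume →
      ∫ x, g x = ∫ u : sphere (0 : Euc d) 1,
        (∫ t in Ioi (0 : ℝ), t ^ (d - 1) * g (t • (u : Euc d))) ∂σ) :
    IsFiniteMeasure σ := by
  set g : Euc d → ℝ := (ball (0 : Euc d) 1).indicator (fun _ => 1) with hg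
  have hgi : Integrable g volume := by
    rw [hg, integrable_indicator_iff measurableSet_ball]
    refine integrableOn_const ?_
    exact measure_ball_lt_top.ne
  have hL : ∫ x, g x = (volume (ball (0 : Euc d) 1)).toReal := by
    rw [hg, integral_indicator_const _ measurableSet_ball]; simp; rfl
  have hLpos : 0 < (volume (ball (0 : Euc d) 1)).toReal := by
    refine ENNReal.toReal_pos ?_ measure_ball_lt_top.ne
    exact (measure_ball_pos volume 0 one_pos).ne'
  have hinner : ∀ u : sphere (0 : Euc d) 1,
      (∫ t in Ioi (0 : ℝ), t ^ (d - 1) * g (t • (u : Euc d))) = (d : ℝ)⁻¹ := by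
    intro u
    have hu : ‖(u : Euc d)‖ = 1 := by simpa [mem_sphere_iff_norm] using u.2
    have h1 : ∀ t ∈ Ioi (0:ℝ), t ^ (d - 1) * g (t • (u : Euc d)) =
        (Ioo (0:ℝ) 1).indicator (fun t => t ^ (d - 1)) t := by
      intro t ht
      rw [mem_Ioi] at ht
      have hn : ‖t • (u : Euc d)‖ = t := by
        rw [norm_smul, Real.norm_eq_abs, abs_of_pos ht, hu, mul_one]
      by_cases h : t < 1
      · rw [hg, indicator_of_mem (by rw [mem_ball_zero_iff, hn]; exact h),
          indicator_of_mem (by exact ⟨ht, h⟩)]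
        simp
      · rw [hg, indicator_of_notMem (by rw [mem_ball_zero_iff, hn]; exact h),
          indicator_of_notMem (by rintro ⟨-, h2⟩; exact h h2)]
        simp
    rw [setIntegral_congr_fun measurableSet_Ioi h1,
      setIntegral_indicator measurableSet_Ioo]
    have : Ioi (0:ℝ) ∩ Ioo 0 1 = Ioo 0 1 := by
      ext t; simp only [mem_inter_iff, mem_Ioi, mem_Ioo]; tauto
    rw [this, ← integral_Ioc_eq_integral_Ioo, ← intervalIntegral.integral_of_le zero_le_one,
      integral_pow]
    have : d - 1 + 1 = d := Nat.succ_pred_eq_of_pos hd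
    rw [this, zero_pow (by omega : d ≠ 0), Nat.cast_sub hd]
    push_cast
    ring_nf
  have key := hσ g hgi
  rw [hL] at key
  rw [integral_congr_ae (Eventually.of_forall hinner), integral_const] at key
  constructor
  rw [lt_top_iff_ne_top]
  intro htop
  rw [measureReal_def, htop] at key
  simp only [ENNReal.toReal_top, zero_smul] at key
  exact hLpos.ne' key

lemma integrable_of_polar (hd : 1 ≤ d) (σ : Measure (sphere (0 : Euc d) 1))
    [IsFiniteMeasure σ]
    (hσ : ∀ g : Euc d → ℝ, Integrable g volume →
      ∫ x, g x = ∫ u : sphere (0 : Euc d) 1,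
        (∫ t in Ioi (0 : ℝ), t ^ (d - 1) * g (t • (u : Euc d))) ∂σ)
    (g : Euc d → ℝ) (hgm : AEMeasurable g volume) (hg0 : ∀ x, 0 ≤ g x)
    (C : ℝ) (hC : 0 ≤ C)
    (hCb : ∀ u : sphere (0 : Euc d) 1,
      IntegrableOn (fun t => t ^ (d - 1) * g (t • (u : Euc d))) (Ioi 0) volume ∧
      (∫ t in Ioi (0:ℝ), t ^ (d - 1) * g (t • (u : Euc d))) ≤ C) :
    Integrable g volume := by
  set gN : ℕ → Euc d → ℝ :=
    fun N x => (closedBall (0 : Euc d) N).indicator (fun y => min (g y) N) x with hgNdef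
  have hgNm : ∀ N, AEMeasurable (gN N) volume := fun N =>
    (hgm.min aemeasurable_const).indicator measurableSet_closedBall
  have hgN0 : ∀ N x, 0 ≤ gN N x := by
    intro N x
    refine indicator_nonneg (fun y _ => ?_) x
    exact le_min (hg0 y) (Nat.cast_nonneg N)
  have hgNle : ∀ N x, gN N x ≤ g x := by
    intro N x
    simp only [hgNdef]
    by_cases h : x ∈ closedBall (0 : Euc d) N
    · rw [indicator_of_mem h]; exact min_le_left _ _
    · rw [indicator_of_notMem h]; exact hg0 x
  have hgNmono : ∀ x, Monotone (fun N => gN N x) := by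
    intro x N M hNM
    simp only [hgNdef]
    by_cases h : x ∈ closedBall (0 : Euc d) N
    · have hM : x ∈ closedBall (0 : Euc d) M :=
        closedBall_subset_closedBall (by exact_mod_cast hNM) h
      rw [indicator_of_mem h, indicator_of_mem hM]
      exact min_le_min le_rfl (by exact_mod_cast hNM)
    · rw [indicator_of_notMem h]
      exact hgN0 M x
  have hgNtend : ∀ x, Tendsto (fun N => gN N x) atTop (nhds (g x)) := by
    intro x
    apply tendsto_atTop_of_eventually_const (i₀ := max ⌈‖x‖⌉₊ ⌈g x⌉₊)
    intro N hN
    have hx : x ∈ closedBall (0 : Euc d) N := by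
      rw [mem_closedBall_zero_iff]
      calc ‖x‖ ≤ ⌈‖x‖⌉₊ := Nat.le_ceil _
        _ ≤ N := by exact_mod_cast le_trans (le_max_left _ _) hN
    have hgx : g x ≤ N := by
      calc g x ≤ ⌈g x⌉₊ := Nat.le_ceil _
        _ ≤ N := by exact_mod_cast le_trans (le_max_right _ _) hN
    simp only [hgNdef]
    rw [indicator_of_mem hx, min_eq_left hgx]
  have hgNint : ∀ N, Integrable (gN N) volume := by
    intro N
    simp only [hgNdef]
    rw [integrable_indicator_iff measurableSet_closedBall]
    refine Integrable.mono' ((integrableOn_const (C := (N:ℝ)) (μ := volume) measure_closedBall_lt_top.ne))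
      ((hgm.min aemeasurable_const).aestronglyMeasurable.restrict) ?_
    refine Eventually.of_forall (fun y => ?_)
    rw [Real.norm_eq_abs, abs_of_nonneg (le_min (hg0 y) (Nat.cast_nonneg N))]
    exact min_le_right _ _
  set B : ℝ := C * (σ univ).toReal with hB
  have hIN : ∀ N, ∫ x, gN N x ≤ B := by
    intro N
    rw [hσ (gN N) (hgNint N)]
    refine le_trans (le_abs_self _) ?_
    rw [← Real.norm_eq_abs]
    refine norm_integral_le_of_norm_le_const ?_
    refine Eventually.of_forall (fun u => ?_)
    rw [Real.norm_eq_abs, abs_of_nonneg]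
    · refine le_trans (integral_mono_of_nonneg ?_ (hCb u).1 ?_) (hCb u).2
      · refine ae_restrict_of_forall_mem measurableSet_Ioi (fun t ht => ?_)
        have ht0 : (0:ℝ) < t := ht
        exact mul_nonneg (by positivity) (hgN0 N _)
      · refine ae_restrict_of_forall_mem measurableSet_Ioi (fun t ht => ?_)
        have ht0 : (0:ℝ) < t := ht
        exact mul_le_mul_of_nonneg_left (hgNle N _) (by positivity)
    · refine setIntegral_nonneg measurableSet_Ioi (fun t ht => ?_)
      have ht0 : (0:ℝ) < t := ht
      exact mul_nonneg (by positivity) (hgN0 N _)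
  have hBnn : 0 ≤ B := mul_nonneg hC ENNReal.toReal_nonneg
  have hlin : ∫⁻ x, ENNReal.ofReal (g x) ≤ ENNReal.ofReal B := by
    have hsup : ∀ x, (⨆ N, ENNReal.ofReal (gN N x)) = ENNReal.ofReal (g x) := by
      intro x
      refine iSup_eq_of_tendsto ?_ ?_
      · exact fun N M h => ENNReal.ofReal_le_ofReal (hgNmono x h)
      · exact (ENNReal.continuous_ofReal.tendsto _).comp (hgNtend x)
    calc ∫⁻ x, ENNReal.ofReal (g x)
        = ∫⁻ x, ⨆ N, ENNReal.ofReal (gN N x) := by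
          refine lintegral_congr (fun x => (hsup x).symm)
      _ = ⨆ N, ∫⁻ x, ENNReal.ofReal (gN N x) := by
          refine lintegral_iSup' (fun N => (hgNm N).ennreal_ofReal) ?_
          exact Eventually.of_forall (fun x N M h => ENNReal.ofReal_le_ofReal (hgNmono x h))
      _ ≤ ENNReal.ofReal B := by
          refine iSup_le (fun N => ?_)
          rw [← ofReal_integral_eq_lintegral_ofReal (hgNint N)
            (Eventually.of_forall (hgN0 N))]
          exact ENNReal.ofReal_le_ofReal (hIN N)
  refine ⟨hgm.aestronglyMeasurable, ?_⟩
  rw [hasFiniteIntegral_iff_norm]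
  calc ∫⁻ x, ENNReal.ofReal ‖g x‖
      = ∫⁻ x, ENNReal.ofReal (g x) := by
        refine lintegral_congr (fun x => ?_)
        rw [Real.norm_eq_abs, abs_of_nonneg (hg0 x)]
    _ ≤ ENNReal.ofReal B := hlin
    _ < ⊤ := ENNReal.ofReal_lt_top

/-- The Hellinger-based loss `E_{D_r}[‖x‖_K] + E_{D_n}[‖x‖_K⁻¹]` equals a
single dual mixed volume `d·Ṽ₋₁(L_r, K_{r,n})` for a star body `K_{r,n}` depending on
`D_r`, `D_n`, and `K`. -/
theorem hellinger_loss_eq_dualMixedVolume {d : ℕ} (hd : 2 ≤ d)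
    (σ : Measure (sphere (0 : Euc d) 1))
    (hσ : ∀ g : Euc d → ℝ, Integrable g volume →
      ∫ x, g x = ∫ u : sphere (0 : Euc d) 1,
        (∫ t in Ioi (0 : ℝ), t ^ (d - 1) * g (t • (u : Euc d))) ∂σ)
    (μ ν : Measure (Euc d)) [IsProbabilityMeasure μ] [IsProbabilityMeasure ν]
    (pr pn : Euc d → ℝ) (hprm : Measurable pr) (hpnm : Measurable pn)
    (hpr0 : ∀ x, 0 ≤ pr x) (hpn0 : ∀ x, 0 ≤ pn x)
    (hμ : μ = volume.withDensity (fun x => ENNReal.ofReal (pr x)))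
    (hν : ν = volume.withDensity (fun x => ENNReal.ofReal (pn x)))
    (ρr ρtn : sphere (0 : Euc d) 1 → ℝ)
    (hρr : ∀ u : sphere (0 : Euc d) 1,
      ρr u = (∫ t in Ioi (0 : ℝ), t ^ d * pr (t • (u : Euc d))) ^ ((1 : ℝ) / (d + 1)))
    (hρtn : ∀ u : sphere (0 : Euc d) 1,
      ρtn u = (∫ t in Ioi (0 : ℝ), t ^ (d - 2) * pn (t • (u : Euc d))) ^ ((1 : ℝ) / (d - 1)))
    (hρrc : Continuous ρr) (hρtnc : Continuous ρtn)
    (hρrp : ∀ u, 0 < ρr u) (hρtnp : ∀ u, 0 < ρtn u)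
    (Lr : Set (Euc d)) (hLr : IsStarBody Lr)
    (hLrρ : ∀ u : sphere (0 : Euc d) 1, radialFn Lr (u : Euc d) = ρr u) :
    ∀ K : Set (Euc d), IsStarBody K →
      ∃ Krn : Set (Euc d), IsStarBody Krn ∧
        (∀ u : sphere (0 : Euc d) 1,
          radialFn Krn (u : Euc d) =
            ((radialFn K (u : Euc d))⁻¹ +
              radialFn K (u : Euc d) * ρtn u ^ (d - 1) / ρr u ^ (d + 1))⁻¹) ∧
        Integrable (fun x => gauge K x) μ ∧
        Integrable (fun x => (gauge K x)⁻¹) ν ∧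
        (∫ x, gauge K x ∂μ) + (∫ x, (gauge K x)⁻¹ ∂ν) =
          ∫ u : sphere (0 : Euc d) 1,
            ((radialFn K (u : Euc d))⁻¹ +
              radialFn K (u : Euc d) * ρtn u ^ (d - 1) / ρr u ^ (d + 1)) *
              ρr u ^ (d + 1) ∂σ ∧
        (∫ u : sphere (0 : Euc d) 1,
            ((radialFn K (u : Euc d))⁻¹ +
              radialFn K (u : Euc d) * ρtn u ^ (d - 1) / ρr u ^ (d + 1)) *
              ρr u ^ (d + 1) ∂σ) =
          (d : ℝ) * ((1 / (d : ℝ)) * ∫ u : sphere (0 : Euc d) 1,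
            radialFn Lr (u : Euc d) ^ (d + 1) * (radialFn Krn (u : Euc d))⁻¹ ∂σ) := by
  intro K hK
  have hd1 : 1 ≤ d := le_trans (by norm_num) hd
  haveI hfin : IsFiniteMeasure σ := sigma_isFiniteMeasure hd1 σ hσ
  have hKρc : Continuous (fun u : sphere (0:Euc d) 1 => radialFn K (u:Euc d)) :=
    continuousOn_iff_continuous_restrict.1 hK.2.2.2.2
  have hKρp : ∀ u : sphere (0:Euc d) 1, 0 < radialFn K (u:Euc d) :=
    fun u => hK.2.2.2.1 u u.2
  set h : sphere (0:Euc d) 1 → ℝ := fun u =>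
    (radialFn K (u:Euc d))⁻¹ +
      radialFn K (u:Euc d) * ρtn u ^ (d-1) / ρr u ^ (d+1) with hhdef
  have hhpos : ∀ u, 0 < h u := by
    intro u
    have h1 : 0 < (radialFn K (u:Euc d))⁻¹ := inv_pos.2 (hKρp u)
    have h2 : 0 ≤ radialFn K (u:Euc d) * ρtn u ^ (d-1) / ρr u ^ (d+1) := by
      have := hKρp u; have := hρtnp u; have := hρrp u; positivity
    simp only [hhdef]
    linarith
  have hhcont : Continuous h := by
    simp only [hhdef]
    refine Continuous.add (hKρc.inv₀ fun u => (hKρp u).ne') ?_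
    exact ((hKρc.mul (hρtnc.pow _)).div (hρrc.pow _)
      (fun u => pow_ne_zero _ (hρrp u).ne'))
  obtain ⟨Krn, hKrnSB, hKrnρ⟩ := exists_starBody hd1 (fun u => (h u)⁻¹)
    (hhcont.inv₀ fun u => (hhpos u).ne') (fun u => inv_pos.2 (hhpos u))
  -- integrability of the radial integrals
  have hexp1 : (1:ℝ) / ((d:ℝ) + 1) ≠ 0 := by positivity
  have hexp2 : (1:ℝ) / ((d:ℝ) - 1) ≠ 0 := by
    have : (2:ℝ) ≤ (d:ℝ) := by exact_mod_cast hd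
    apply div_ne_zero one_ne_zero; linarith
  have hIr : ∀ u : sphere (0:Euc d) 1,
      IntegrableOn (fun t => t ^ d * pr (t • (u:Euc d))) (Ioi 0) volume := by
    intro u
    by_contra hcon
    have := hρr u
    rw [integral_undef hcon, Real.zero_rpow hexp1] at this
    exact (hρrp u).ne' this
  have hIn : ∀ u : sphere (0:Euc d) 1,
      IntegrableOn (fun t => t ^ (d-2) * pn (t • (u:Euc d))) (Ioi 0) volume := by
    intro u
    by_contra hcon
    have := hρtn u
    rw [integral_undef hcon, Real.zero_rpow hexp2] at this
    exact (hρtnp u).ne' this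
  have hIrval : ∀ u : sphere (0:Euc d) 1,
      ∫ t in Ioi (0:ℝ), t ^ d * pr (t • (u:Euc d)) = ρr u ^ (d+1) := by
    intro u
    have h0 : 0 ≤ ∫ t in Ioi (0:ℝ), t ^ d * pr (t • (u:Euc d)) :=
      setIntegral_nonneg measurableSet_Ioi
        (fun t ht => mul_nonneg (pow_nonneg (le_of_lt ht) d) (hpr0 _))
    rw [hρr u, ← Real.rpow_natCast _ (d+1), ← Real.rpow_mul h0]
    rw [show (1:ℝ)/((d:ℝ)+1) * (((d+1 : ℕ)):ℝ) = 1 by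
      push_cast; field_simp]
    rw [Real.rpow_one]
  have hInval : ∀ u : sphere (0:Euc d) 1,
      ∫ t in Ioi (0:ℝ), t ^ (d-2) * pn (t • (u:Euc d)) = ρtn u ^ (d-1) := by
    intro u
    have h0 : 0 ≤ ∫ t in Ioi (0:ℝ), t ^ (d-2) * pn (t • (u:Euc d)) :=
      setIntegral_nonneg measurableSet_Ioi
        (fun t ht => mul_nonneg (pow_nonneg (le_of_lt ht) _) (hpn0 _))
    rw [hρtn u, ← Real.rpow_natCast _ (d-1), ← Real.rpow_mul h0]
    have hdm1 : (0:ℝ) < (d:ℝ) - 1 := by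
      have : (2:ℝ) ≤ (d:ℝ) := by exact_mod_cast hd
      linarith
    rw [show (1:ℝ)/((d:ℝ)-1) * (((d-1 : ℕ)):ℝ) = 1 by
      rw [Nat.cast_sub hd1]
      push_cast
      rw [one_div, inv_mul_cancel₀ hdm1.ne']]
    rw [Real.rpow_one]
  -- gauge facts
  have hgauge : ∀ (u : sphere (0:Euc d) 1) (t:ℝ), 0 ≤ t →
      gauge K (t • (u:Euc d)) = t * (radialFn K (u:Euc d))⁻¹ := by
    intro u t ht
    have hu : ‖(u:Euc d)‖ = 1 := by simpa [mem_sphere_iff_norm] using u.2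
    rw [gauge_smul_of_nonneg ht, gauge_eq_inv_radialFn hK hu, smul_eq_mul]
  -- a.e. measurability of the gauge
  have hsph : ∀ x : Euc d, x ≠ 0 → ‖x‖⁻¹ • x ∈ sphere (0 : Euc d) 1 := by
    intro x hx
    rw [mem_sphere_zero_iff_norm, norm_smul, norm_inv, norm_norm, inv_mul_cancel₀ (norm_ne_zero_iff.2 hx)]
  have hgaugeG : ∀ x : Euc d, x ≠ 0 →
      gauge K x = ‖x‖ * (radialFn K (‖x‖⁻¹ • x))⁻¹ := by
    intro x hx
    have hxn : (0:ℝ) < ‖x‖ := norm_pos_iff.2 hx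
    have : x = ‖x‖ • (‖x‖⁻¹ • x) := by
      rw [smul_smul, mul_inv_cancel₀ hxn.ne', one_smul]
    conv_lhs => rw [this]
    exact hgauge ⟨_, hsph x hx⟩ ‖x‖ hxn.le
  have hGcont : ContinuousOn (fun x : Euc d => ‖x‖ * (radialFn K (‖x‖⁻¹ • x))⁻¹)
      {x : Euc d | x ≠ 0} := by
    have hm : ContinuousOn (fun x : Euc d => ‖x‖⁻¹ • x) {x : Euc d | x ≠ 0} := by
      refine ContinuousOn.fun_smul ?_ continuousOn_id
      exact (continuous_norm.continuousOn).inv₀ (fun x hx => by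
        simpa [norm_eq_zero] using hx)
    refine ContinuousOn.mul (continuous_norm.continuousOn) ?_
    refine ContinuousOn.inv₀ (hK.2.2.2.2.comp hm (fun x hx => hsph x hx)) ?_
    intro x hx
    exact (hK.2.2.2.1 _ (hsph x hx)).ne'
  have hvol0 : volume ({(0:Euc d)} : Set (Euc d)) = 0 := by
    haveI : Nonempty (Fin d) := ⟨⟨0, by omega⟩⟩
    exact measure_singleton _
  have hae0 : ∀ᵐ x : Euc d, x ∈ {x : Euc d | x ≠ 0} := by
    rw [ae_iff]
    convert hvol0 using 2
    ext x
    simp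
  have hgaugeAE : AEMeasurable (gauge K) (volume : Measure (Euc d)) := by
    have h1 : AEMeasurable (fun x : Euc d => ‖x‖ * (radialFn K (‖x‖⁻¹ • x))⁻¹)
        ((volume : Measure (Euc d)).restrict {x : Euc d | x ≠ 0}) :=
      hGcont.aemeasurable (isOpen_ne.measurableSet)
    rw [Measure.restrict_eq_self_of_ae_mem hae0] at h1
    refine h1.congr ?_
    refine hae0.mono (fun x hx => ?_)
    exact (hgaugeG x hx).symm
  have hgauge_nonneg : ∀ x : Euc d, 0 ≤ gauge K x := fun x => gauge_nonneg x
  -- the function g and its polar integrals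
  set g : Euc d → ℝ := fun x => gauge K x * pr x + (gauge K x)⁻¹ * pn x with hgdef
  have hg0 : ∀ x, 0 ≤ g x := by
    intro x
    have := hgauge_nonneg x
    have := hpr0 x; have := hpn0 x
    have : 0 ≤ (gauge K x)⁻¹ := inv_nonneg.2 (hgauge_nonneg x)
    simp only [hgdef]
    positivity
  have hgm : AEMeasurable g volume := by
    exact (hgaugeAE.mul hprm.aemeasurable).add (hgaugeAE.inv.mul hpnm.aemeasurable)
  set Cfun : sphere (0:Euc d) 1 → ℝ := fun u =>
    (radialFn K (u:Euc d))⁻¹ * ρr u ^ (d+1) + radialFn K (u:Euc d) * ρtn u ^ (d-1)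
    with hCfundef
  have hCfun0 : ∀ u, 0 ≤ Cfun u := by
    intro u
    have h1 := hKρp u; have h2 := hρrp u; have h3 := hρtnp u
    simp only [hCfundef]
    positivity
  -- pointwise inner integrand identity
  have hptwise : ∀ (u : sphere (0:Euc d) 1), ∀ t ∈ Ioi (0:ℝ),
      t ^ (d-1) * g (t • (u:Euc d)) =
        (radialFn K (u:Euc d))⁻¹ * (t ^ d * pr (t • (u:Euc d))) +
        radialFn K (u:Euc d) * (t ^ (d-2) * pn (t • (u:Euc d))) := by
    intro u t ht
    have ht0 : (0:ℝ) < t := ht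
    have hγ : 0 < radialFn K (u:Euc d) := hKρp u
    have hg' : gauge K (t • (u:Euc d)) = t * (radialFn K (u:Euc d))⁻¹ :=
      hgauge u t ht0.le
    have e1 : t ^ (d-1) * t = t ^ d := by
      rw [← pow_succ]; congr 1; omega
    have e2 : t ^ (d-1) * t⁻¹ = t ^ (d-2) := by
      have : t ^ (d-1) = t ^ (d-2) * t := by rw [← pow_succ]; congr 1; omega
      rw [this, mul_assoc, mul_inv_cancel₀ ht0.ne', mul_one]
    simp only [hgdef, hg', mul_inv, inv_inv]
    rw [mul_add]
    congr 1
    · rw [show t^(d-1) * (t * (radialFn K (u:Euc d))⁻¹ * pr (t • (u:Euc d)))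
          = (t^(d-1)*t) * (radialFn K (u:Euc d))⁻¹ * pr (t • (u:Euc d)) by ring, e1]
      ring
    · rw [show t^(d-1) * (t⁻¹ * radialFn K (u:Euc d) * pn (t • (u:Euc d)))
          = (t^(d-1)*t⁻¹) * radialFn K (u:Euc d) * pn (t • (u:Euc d)) by ring, e2]
      ring
  have hinner : ∀ u : sphere (0:Euc d) 1,
      IntegrableOn (fun t => t ^ (d-1) * g (t • (u:Euc d))) (Ioi 0) volume ∧
      (∫ t in Ioi (0:ℝ), t ^ (d-1) * g (t • (u:Euc d))) = Cfun u := by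
    intro u
    have hint : IntegrableOn (fun t =>
        (radialFn K (u:Euc d))⁻¹ * (t ^ d * pr (t • (u:Euc d))) +
        radialFn K (u:Euc d) * (t ^ (d-2) * pn (t • (u:Euc d)))) (Ioi 0) volume :=
      ((hIr u).const_mul _).add ((hIn u).const_mul _)
    have haeeq : (fun t => t ^ (d-1) * g (t • (u:Euc d))) =ᵐ[volume.restrict (Ioi 0)]
        (fun t => (radialFn K (u:Euc d))⁻¹ * (t ^ d * pr (t • (u:Euc d))) +
          radialFn K (u:Euc d) * (t ^ (d-2) * pn (t • (u:Euc d)))) :=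
      ae_restrict_of_forall_mem measurableSet_Ioi (hptwise u)
    refine ⟨hint.congr haeeq.symm, ?_⟩
    rw [integral_congr_ae haeeq]
    rw [integral_add ((hIr u).const_mul _) ((hIn u).const_mul _),
      integral_const_mul, integral_const_mul, hIrval u, hInval u]
  -- boundedness of Cfun
  haveI hcs : CompactSpace (sphere (0 : Euc d) 1) := by
    rw [← isCompact_iff_compactSpace]
    exact isCompact_sphere _ _
  have hvne : (univ : Set (sphere (0 : Euc d) 1)).Nonempty := by
    have : (sphere (0 : Euc d) 1).Nonempty := by
      refine ⟨EuclideanSpace.single (⟨0, by omega⟩ : Fin d) (1:ℝ), ?_⟩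
      simp [mem_sphere_iff_norm, EuclideanSpace.norm_single]
    obtain ⟨v, hv⟩ := this
    exact ⟨⟨v, hv⟩, trivial⟩
  have hCfunc : Continuous Cfun := by
    simp only [hCfundef]
    exact ((hKρc.inv₀ fun u => (hKρp u).ne').mul (hρrc.pow _)).add
      (hKρc.mul (hρtnc.pow _))
  obtain ⟨u₁, -, hmax⟩ := isCompact_univ.exists_isMaxOn hvne hCfunc.continuousOn
  rw [isMaxOn_iff] at hmax
  set C := Cfun u₁ with hCdef
  have hC0 : 0 ≤ C := hCfun0 u₁
  -- integrability of g
  have hgint : Integrable g volume := by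
    refine integrable_of_polar hd1 σ hσ g hgm hg0 C hC0 (fun u => ?_)
    refine ⟨(hinner u).1, ?_⟩
    rw [(hinner u).2]
    exact hmax u trivial
  have hg1int : Integrable (fun x => gauge K x * pr x) volume := by
    refine hgint.mono' (hgaugeAE.mul hprm.aemeasurable).aestronglyMeasurable ?_
    refine Eventually.of_forall (fun x => ?_)
    rw [Real.norm_eq_abs, abs_of_nonneg (mul_nonneg (hgauge_nonneg x) (hpr0 x))]
    have : 0 ≤ (gauge K x)⁻¹ * pn x :=
      mul_nonneg (inv_nonneg.2 (hgauge_nonneg x)) (hpn0 x)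
    simp only [hgdef]
    linarith
  have hg2int : Integrable (fun x => (gauge K x)⁻¹ * pn x) volume := by
    refine hgint.mono' (hgaugeAE.inv.mul hpnm.aemeasurable).aestronglyMeasurable ?_
    refine Eventually.of_forall (fun x => ?_)
    rw [Real.norm_eq_abs, abs_of_nonneg (mul_nonneg (inv_nonneg.2 (hgauge_nonneg x)) (hpn0 x))]
    have : 0 ≤ gauge K x * pr x := mul_nonneg (hgauge_nonneg x) (hpr0 x)
    simp only [hgdef]
    linarith
  -- conversions to withDensity
  have haelt : ∀ᵐ x : Euc d ∂(volume), ENNReal.ofReal (pr x) < ⊤ :=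
    Eventually.of_forall (fun x => ENNReal.ofReal_lt_top)
  have haelt' : ∀ᵐ x : Euc d ∂(volume), ENNReal.ofReal (pn x) < ⊤ :=
    Eventually.of_forall (fun x => ENNReal.ofReal_lt_top)
  have hμint : Integrable (fun x => gauge K x) μ := by
    rw [hμ, integrable_withDensity_iff (hprm.ennreal_ofReal) haelt]
    refine hg1int.congr ?_
    refine Eventually.of_forall (fun x => ?_)
    simp only [ENNReal.toReal_ofReal (hpr0 x)]
  have hνint : Integrable (fun x => (gauge K x)⁻¹) ν := by
    rw [hν, integrable_withDensity_iff (hpnm.ennreal_ofReal) haelt']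
    refine hg2int.congr ?_
    refine Eventually.of_forall (fun x => ?_)
    simp only [ENNReal.toReal_ofReal (hpn0 x)]
  -- integral conversions
  have hμval : (∫ x, gauge K x ∂μ) = ∫ x, gauge K x * pr x := by
    rw [hμ]
    rw [show (fun x : Euc d => ENNReal.ofReal (pr x))
        = (fun x : Euc d => ((Real.toNNReal (pr x) : NNReal) : ENNReal)) from rfl]
    rw [integral_withDensity_eq_integral_smul hprm.real_toNNReal _]
    refine integral_congr_ae (Eventually.of_forall (fun x => ?_))
    simp only [NNReal.smul_def, smul_eq_mul, Real.coe_toNNReal _ (hpr0 x)]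
    ring
  have hνval : (∫ x, (gauge K x)⁻¹ ∂ν) = ∫ x, (gauge K x)⁻¹ * pn x := by
    rw [hν]
    rw [show (fun x : Euc d => ENNReal.ofReal (pn x))
        = (fun x : Euc d => ((Real.toNNReal (pn x) : NNReal) : ENNReal)) from rfl]
    rw [integral_withDensity_eq_integral_smul hpnm.real_toNNReal _]
    refine integral_congr_ae (Eventually.of_forall (fun x => ?_))
    simp only [NNReal.smul_def, smul_eq_mul, Real.coe_toNNReal _ (hpn0 x)]
    ring
  -- the main computation
  have hsum : (∫ x, gauge K x ∂μ) + (∫ x, (gauge K x)⁻¹ ∂ν) =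
      ∫ u : sphere (0 : Euc d) 1,
        ((radialFn K (u : Euc d))⁻¹ +
          radialFn K (u : Euc d) * ρtn u ^ (d - 1) / ρr u ^ (d + 1)) *
          ρr u ^ (d + 1) ∂σ := by
    rw [hμval, hνval, ← integral_add hg1int hg2int]
    rw [show (fun x => gauge K x * pr x + (gauge K x)⁻¹ * pn x) = g from rfl]
    rw [hσ g hgint]
    refine integral_congr_ae (Eventually.of_forall (fun u => ?_))
    show (∫ t in Ioi (0:ℝ), t ^ (d-1) * g (t • (u:Euc d))) =
      ((radialFn K (u:Euc d))⁻¹ +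
        radialFn K (u:Euc d) * ρtn u ^ (d - 1) / ρr u ^ (d + 1)) * ρr u ^ (d + 1)
    rw [(hinner u).2]
    simp only [hCfundef]
    rw [add_mul]
    congr 1
    rw [div_mul_cancel₀ _ (pow_ne_zero _ (hρrp u).ne')]
  refine ⟨Krn, hKrnSB, fun u => hKrnρ u, hμint, hνint, hsum, ?_⟩
  have hd0 : (d:ℝ) ≠ 0 := by positivity
  rw [← mul_assoc, mul_one_div, div_self hd0, one_mul]
  refine integral_congr_ae (Eventually.of_forall (fun u => ?_))
  show ((radialFn K (u:Euc d))⁻¹ +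
      radialFn K (u:Euc d) * ρtn u ^ (d - 1) / ρr u ^ (d + 1)) * ρr u ^ (d + 1) =
    radialFn Lr (u : Euc d) ^ (d + 1) * (radialFn Krn (u : Euc d))⁻¹
  rw [hLrρ u, hKrnρ u, inv_inv]
  simp only [hhdef]
  ring
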